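/- Assume additionally that δ ≤ n−2. Then the cardinality of the set tar'' = {δ-monomials m : r ≤ deg m ≤ s−1, m_δ ≤ r−w−1, and m_{δ+1} ≥ w} equals Σ_{d=r}^{s−1} Σ_{e = d−r+w+1}^{d} Σ_{u=0}^{e−w} C(u + n − δ − 2, u), where C denotes the binomial coefficient. -/

import Mathlib

open MvPolynomial
open scoped Classical

noncomputable section

/-- Total degree of an exponent vector `m : Fin n →₀ ℕ`. -/
def mdeg {n : ℕ} (m : Fin n →₀ ℕ) : ℕ := ∑ k, m k

/-- `m` is a δ-monomial: all exponents of variables strictly before `δ` vanish. -/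
def IsDeltaMon {n : ℕ} (δ : Fin n) (m : Fin n →₀ ℕ) : Prop := ∀ k < δ, m k = 0

/-- `m` is a (δ+1)-monomial: all exponents of variables up to and including `δ` vanish. -/
def IsSuccDeltaMon {n : ℕ} (δ : Fin n) (m : Fin n →₀ ℕ) : Prop := ∀ k ≤ δ, m k = 0

/-- The order ideal `O(n,r,s,δ,w)`. -/
def OIdeal {n : ℕ} (r s w : ℕ) (δ : Fin n) : Set (Fin n →₀ ℕ) :=
  {m | mdeg m < r ∨ (IsDeltaMon δ m ∧ r ≤ mdeg m ∧ mdeg m ≤ s ∧ m δ + w + 1 ≤ r)}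

/-- The border `∂O`. -/
def Border {n : ℕ} (r s w : ℕ) (δ : Fin n) : Set (Fin n →₀ ℕ) :=
  {m | m ∉ OIdeal r s w δ ∧
    ∃ (α : Fin n) (t : Fin n →₀ ℕ), t ∈ OIdeal r s w δ ∧ m = Finsupp.single α 1 + t}

/-- The set `S_D` of "diagonal" border monomials. -/
def SD {n : ℕ} (r s w : ℕ) (δ : Fin n) : Set (Fin n →₀ ℕ) :=
  {m | m ∈ Border r s w δ ∧ IsDeltaMon δ m ∧ r + 1 ≤ mdeg m ∧ mdeg m ≤ s}

/-- The set `S_L` of "leading" monomials. -/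
def SL {n : ℕ} (r w : ℕ) (δ : Fin n) : Set (Fin n →₀ ℕ) :=
  {m | IsDeltaMon δ m ∧ mdeg m = r ∧ r - w ≤ m δ}

/-- `tar = {m ∈ O : r ≤ deg m ≤ s}`. -/
def Tar {n : ℕ} (r s w : ℕ) (δ : Fin n) : Set (Fin n →₀ ℕ) :=
  {m | m ∈ OIdeal r s w δ ∧ r ≤ mdeg m ∧ mdeg m ≤ s}

/-- `tar' = {m ∈ tar : deg m ≤ s−1}`. -/
def Tar' {n : ℕ} (r s w : ℕ) (δ : Fin n) : Set (Fin n →₀ ℕ) :=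
  {m | m ∈ Tar r s w δ ∧ mdeg m ≤ s - 1}

/-- `tar'' = {m ∈ tar' : m_{δ+1} ≥ w}` (`δ'` is the index of `x_{δ+1}`). -/
def Tar'' {n : ℕ} (r s w : ℕ) (δ δ' : Fin n) : Set (Fin n →₀ ℕ) :=
  {m | m ∈ Tar' r s w δ ∧ w ≤ m δ'}

/-- `trailmon = {m ∈ O : deg m = s}`. -/
def Trail {n : ℕ} (r s w : ℕ) (δ : Fin n) : Set (Fin n →₀ ℕ) :=
  {m | m ∈ OIdeal r s w δ ∧ mdeg m = s}

/-- `leadmon = {m : deg m = r, m ∉ O}`. -/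
def Lead {n : ℕ} (r s w : ℕ) (δ : Fin n) : Set (Fin n →₀ ℕ) :=
  {m | mdeg m = r ∧ m ∉ OIdeal r s w δ}

/-- `Seg_a`: δ-monomials of degree `r` with `x_δ`-exponent `r − a`. -/
def SegA {n : ℕ} (r a : ℕ) (δ : Fin n) : Set (Fin n →₀ ℕ) :=
  {b | IsDeltaMon δ b ∧ mdeg b = r ∧ b δ = r - a}

/-- The monomial `x_δ^{r−a}·x_{δ+1}^{a}` (`δ'` is the index of `x_{δ+1}`). -/
def bstar {n : ℕ} (r a : ℕ) (δ δ' : Fin n) : Fin n →₀ ℕ :=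
  Finsupp.single δ (r - a) + Finsupp.single δ' a

/-- Truncation: sum of homogeneous components of degree `0` through `s`. -/
def truncLE {n : ℕ} {R : Type*} [CommRing R] (s : ℕ) (P : MvPolynomial (Fin n) R) :
    MvPolynomial (Fin n) R :=
  ∑ m ∈ P.support.filter (fun m => mdeg m ≤ s), monomial m (coeff m P)

/-- `optX R none = 1 = X₀`, `optX R (some a) = X a`. -/
def optX {n : ℕ} (R : Type*) [CommRing R] : Option (Fin n) → MvPolynomial (Fin n) R
  | none => 1
  | some a => X a

/-- `optE none = 0 = e₀`, `optE (some a) = e_a`. -/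
def optE {n : ℕ} : Option (Fin n) → (Fin n →₀ ℕ)
  | none => 0
  | some a => Finsupp.single a 1

/-- The reduction operator determined by a target function `UpsD` on `S_D`. -/
def redFn {n : ℕ} {R : Type*} [CommRing R] (r s w : ℕ) (δ : Fin n)
    (UpsD : (Fin n →₀ ℕ) → MvPolynomial (Fin n) R) (P : MvPolynomial (Fin n) R) :
    MvPolynomial (Fin n) R :=
  (∑ m ∈ P.support.filter (fun m => m ∈ Tar r s w δ), monomial m (coeff m P)) -
  ∑ m ∈ P.support.filter (fun m => m ∈ SD r s w δ), coeff m P • UpsD m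

/-- The polynomial ring over `K` in the distinguished indeterminates `C_{(t,b)}`
and the modification indeterminates `θ_m`. -/
abbrev BigA (K : Type*) [Field K] {n : ℕ} (r s w : ℕ) (δ δ' : Fin n) : Type _ :=
  MvPolynomial ((↥(Trail r s w δ) × ↥(Lead r s w δ)) ⊕ ↥(Tar'' r s w δ δ')) K

/-- The generic linear combination `N_b = Σ_t C_{(t,b)}·X^t` for `b ∈ leadmon`, `0` otherwise. -/
def NB (K : Type*) [Field K] {n : ℕ} (r s w : ℕ) (δ δ' : Fin n) (b : Fin n →₀ ℕ) :
    MvPolynomial (Fin n) (BigA K r s w δ δ') :=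
  if hb : b ∈ Lead r s w δ then
    ∑ᶠ t : ↥(Trail r s w δ),
      monomial (t : Fin n →₀ ℕ)
        (MvPolynomial.X (Sum.inl (t, ⟨b, hb⟩)) : BigA K r s w δ δ')
  else 0


section Aux

lemma mdeg_add' {n : ℕ} (f g : Fin n →₀ ℕ) : mdeg (f + g) = mdeg f + mdeg g := by
  simp [mdeg, Finset.sum_add_distrib]

lemma mdeg_single' {n : ℕ} (a : Fin n) (v : ℕ) : mdeg (Finsupp.single a v) = v := by
  classical
  simp [mdeg, Finsupp.single_apply]

lemma pair_le_mdeg' {n : ℕ} {a b : Fin n} (hab : a ≠ b) (f : Fin n →₀ ℕ) :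
    f a + f b ≤ mdeg f := by
  classical
  calc f a + f b = ∑ k ∈ ({a, b} : Finset (Fin n)), f k := (Finset.sum_pair hab).symm
    _ ≤ mdeg f := Finset.sum_le_sum_of_subset (Finset.subset_univ _)

lemma mdeg_erase_add' {n : ℕ} (a : Fin n) (f : Fin n →₀ ℕ) :
    mdeg (f.erase a) + f a = mdeg f := by
  classical
  conv_rhs => rw [← Finsupp.erase_add_single a f]
  rw [mdeg_add', mdeg_single']

lemma card_finsuppAntidiag_eq' {ι : Type*} [Fintype ι] [DecidableEq ι] (s : Finset ι) (u : ℕ) :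
    (s.finsuppAntidiag u).card = (s.card + u - 1).choose u := by
  classical
  have E1 : ↥(s.finsuppAntidiag u) ≃
      {f : {f : ι →₀ ℕ // ↑f.support ⊆ (↑s : Set ι)} // Finsupp.sum f.1 (fun _ x => x) = u} := by
    refine Equiv.symm ((Equiv.subtypeSubtypeEquivSubtypeInter
        (fun f : ι →₀ ℕ => ↑f.support ⊆ (↑s : Set ι))
        (fun f => Finsupp.sum f (fun _ x => x) = u)).trans
      (Equiv.subtypeEquivRight (fun f => ?_)))
    rw [Finset.mem_finsuppAntidiag']
    constructor
    · rintro ⟨h1, h2⟩; exact ⟨h2, Finset.coe_subset.mp h1⟩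
    · rintro ⟨h1, h2⟩; exact ⟨Finset.coe_subset.mpr h2, h1⟩
  have E2 : {f : {f : ι →₀ ℕ // ↑f.support ⊆ (↑s : Set ι)} // Finsupp.sum f.1 (fun _ x => x) = u} ≃
      {g : ((↑s : Set ι) →₀ ℕ) // Finsupp.sum g (fun _ x => x) = u} := by
    refine Equiv.subtypeEquiv (Finsupp.restrictSupportEquiv (↑s : Set ι) ℕ) (fun f => ?_)
    have h : Finsupp.sum (Finsupp.restrictSupportEquiv (↑s : Set ι) ℕ f) (fun _ x => x)
        = Finsupp.sum f.1 (fun _ x => x) :=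
      Finsupp.sum_subtypeDomain_index (h := fun _ x => x) (fun x hx => f.2 hx)
    rw [h]
  have E3 : {g : ((↑s : Set ι) →₀ ℕ) // Finsupp.sum g (fun _ x => x) = u} ≃
      {m : Multiset (↑s : Set ι) // Multiset.card m = u} := by
    refine Equiv.subtypeEquiv (Finsupp.orderIsoMultiset (ι := (↑s : Set ι))).toEquiv (fun g => ?_)
    show Finsupp.sum g (fun _ x => x) = u ↔ Multiset.card (Finsupp.toMultiset g) = u
    rw [Finsupp.card_toMultiset]
    exact Iff.rfl
  have E4 : {m : Multiset (↑s : Set ι) // Multiset.card m = u} ≃ Sym (↑s : Set ι) u :=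
    Equiv.refl _
  have hc : Fintype.card (↥(s.finsuppAntidiag u)) = Fintype.card (Sym (↑s : Set ι) u) :=
    Fintype.card_congr ((E1.trans E2).trans (E3.trans E4))
  have hcard2 : Fintype.card (↑s : Set ι) = s.card := by
    rw [Fintype.card_congr (Equiv.subtypeEquivRight (fun x => Finset.mem_coe (s := s)))]
    exact Fintype.card_coe s
  rw [Fintype.card_coe] at hc
  rw [hc, Sym.card_sym_eq_choose, hcard2]

end Aux

/-- the cardinality of `tar''` (assuming additionally `δ ≤ n−2`,
i.e. `(δ:ℕ) + 3 ≤ n` in our 0-based indexing). -/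
theorem statement5 (n r s w : ℕ) (δ : Fin n) (hn : 2 ≤ n) (hr : 2 ≤ r) (hrs : r < s)
    (hδ : (δ : ℕ) + 1 < n) (hw : w + 1 ≤ r) (hδn : (δ : ℕ) + 3 ≤ n) :
    Set.ncard {m : Fin n →₀ ℕ | IsDeltaMon δ m ∧ r ≤ mdeg m ∧ mdeg m ≤ s - 1 ∧
        m δ + w + 1 ≤ r ∧ w ≤ m ⟨(δ : ℕ) + 1, hδ⟩} =
      ∑ d ∈ Finset.Icc r (s - 1), ∑ e ∈ Finset.Icc (d - r + w + 1) d,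
        ∑ u ∈ Finset.Icc 0 (e - w), (u + (n - ((δ : ℕ) + 3))).choose u := by
  classical
  set δ' : Fin n := ⟨(δ : ℕ) + 1, hδ⟩ with hδ'def
  have hδ'val : (δ' : ℕ) = (δ : ℕ) + 1 := rfl
  have hne : δ ≠ δ' := by
    intro h
    have h2 := congrArg Fin.val h
    rw [hδ'val] at h2
    omega
  set c : ℕ := (δ : ℕ) + 2 with hcdef
  set ts : Finset (Fin n) := Finset.univ.filter (fun j => c ≤ (j : ℕ)) with htsdef
  have hmem_ts : ∀ j : Fin n, j ∈ ts ↔ c ≤ (j : ℕ) := by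
    intro j; simp [htsdef]
  have hts_card : ts.card = n - c := by
    have h1 : ts = Finset.Ici (⟨c, by omega⟩ : Fin n) := by
      ext j
      simp [htsdef, Fin.le_def]
    rw [h1, Fin.card_Ici]
  set F : Finset (Fin n →₀ ℕ) :=
    ((Finset.Icc r (s-1)).biUnion (fun d => Finset.finsuppAntidiag Finset.univ d)).filter
      (fun m => IsDeltaMon δ m ∧ r ≤ mdeg m ∧ mdeg m ≤ s - 1 ∧ m δ + w + 1 ≤ r ∧ w ≤ m δ')
    with hFdef
  have hmemF : ∀ m : Fin n →₀ ℕ, m ∈ F ↔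
      (IsDeltaMon δ m ∧ r ≤ mdeg m ∧ mdeg m ≤ s - 1 ∧ m δ + w + 1 ≤ r ∧ w ≤ m δ') := by
    intro m
    rw [hFdef, Finset.mem_filter]
    constructor
    · exact fun h => h.2
    · intro hm
      refine ⟨Finset.mem_biUnion.2 ⟨mdeg m, Finset.mem_Icc.2 ⟨hm.2.1, hm.2.2.1⟩, ?_⟩, hm⟩
      rw [Finset.mem_finsuppAntidiag]
      exact ⟨rfl, Finset.subset_univ _⟩
  have hsetF : {m : Fin n →₀ ℕ | IsDeltaMon δ m ∧ r ≤ mdeg m ∧ mdeg m ≤ s - 1 ∧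
      m δ + w + 1 ≤ r ∧ w ≤ m δ'} = ↑F := by
    ext m
    simp only [Set.mem_setOf_eq, Finset.mem_coe, hmemF]
  rw [hsetF, Set.ncard_coe_finset]
  rw [Finset.card_eq_sum_card_fiberwise (f := fun m => mdeg m) (t := Finset.Icc r (s-1))
    (fun m hm => Finset.mem_Icc.2 ⟨((hmemF m).1 hm).2.1, ((hmemF m).1 hm).2.2.1⟩)]
  refine Finset.sum_congr rfl (fun d hd => ?_)
  rw [Finset.card_eq_sum_card_fiberwise (f := fun m => d - m δ)
    (t := Finset.Icc (d - r + w + 1) d) (fun m hm => ?_)]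
  swap
  · rw [Finset.mem_coe, Finset.mem_filter] at hm
    rw [Finset.mem_coe]
    obtain ⟨hmF, hmd⟩ := hm
    obtain ⟨h1, h2, h3, h4, h5⟩ := (hmemF m).1 hmF
    rw [Finset.mem_Icc] at hd ⊢
    beta_reduce at hmd ⊢
    omega
  refine Finset.sum_congr rfl (fun e he => ?_)
  rw [Finset.card_eq_sum_card_fiberwise (f := fun m => d - m δ - m δ')
    (t := Finset.Icc 0 (e - w)) (fun m hm => ?_)]
  swap
  · rw [Finset.mem_coe, Finset.mem_filter, Finset.mem_filter] at hm
    rw [Finset.mem_coe]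
    obtain ⟨⟨hmF, hmd⟩, hme⟩ := hm
    obtain ⟨h1, h2, h3, h4, h5⟩ := (hmemF m).1 hmF
    have hp := pair_le_mdeg' hne m
    rw [Finset.mem_Icc] at hd he ⊢
    beta_reduce at hmd hme ⊢
    omega
  refine Finset.sum_congr rfl (fun u hu => ?_)
  beta_reduce
  have himg : (((F.filter (fun m => mdeg m = d)).filter (fun m => d - m δ = e)).filter
      (fun m => d - m δ - m δ' = u)) =
      (ts.finsuppAntidiag u).image
        (fun t => Finsupp.single δ (d - e) + Finsupp.single δ' (e - u) + t) := by
    ext m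
    simp only [Finset.mem_filter, Finset.mem_image, Finset.mem_finsuppAntidiag]
    rw [Finset.mem_Icc] at hd he hu
    constructor
    · rintro ⟨⟨⟨hmF, hmd⟩, hme⟩, hmu⟩
      obtain ⟨h1, h2, h3, h4, h5⟩ := (hmemF m).1 hmF
      have hp := pair_le_mdeg' hne m
      set t : Fin n →₀ ℕ := (m.erase δ).erase δ' with htdef
      have htδ : t δ = 0 := by
        rw [htdef, Finsupp.erase_ne hne, Finsupp.erase_same]
      have htδ' : t δ' = 0 := Finsupp.erase_same
      have htval : ∀ j : Fin n, j ≠ δ → j ≠ δ' → t j = m j := by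
        intro j hj1 hj2
        rw [htdef, Finsupp.erase_ne hj2, Finsupp.erase_ne hj1]
      have hsupp : t.support ⊆ ts := by
        intro j hj
        rw [Finsupp.mem_support_iff] at hj
        rw [hmem_ts]
        by_contra hcj
        push_neg at hcj
        have hj1 : j ≠ δ' := by
          intro h; rw [h] at hj; exact hj htδ'
        have hj2 : j ≠ δ := by
          intro h; rw [h] at hj; exact hj htδ
        have hjlt : (j : ℕ) < (δ : ℕ) := by
          have e1 : (j : ℕ) ≠ (δ : ℕ) := fun h => hj2 (Fin.ext h)
          have e2 : (j : ℕ) ≠ (δ : ℕ) + 1 := fun h => hj1 (Fin.ext (by rw [hδ'val, h]))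
          omega
        rw [htval j hj2 hj1] at hj
        exact hj (h1 j (by rwa [Fin.lt_def]))
      have hdt : mdeg t + m δ' + m δ = mdeg m := by
        have e1 := mdeg_erase_add' δ m
        have e2 := mdeg_erase_add' δ' (m.erase δ)
        rw [Finsupp.erase_ne hne.symm] at e2
        rw [← htdef] at e2
        omega
      have hsum_ts : ts.sum ⇑t = mdeg t :=
        Finset.sum_subset (Finset.subset_univ ts) (fun x _ hx =>
          Finsupp.notMem_support_iff.1 (fun hxs => hx (hsupp hxs)))
      refine ⟨t, ⟨?_, hsupp⟩, ?_⟩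
      · omega
      · have e2 : t + Finsupp.single δ' (m δ') = m.erase δ := by
          have h := Finsupp.erase_add_single δ' (m.erase δ)
          rwa [Finsupp.erase_ne hne.symm, ← htdef] at h
        have e3 : m.erase δ + Finsupp.single δ (m δ) = m := Finsupp.erase_add_single δ m
        have hrec : Finsupp.single δ (m δ) + Finsupp.single δ' (m δ') + t = m := by
          calc Finsupp.single δ (m δ) + Finsupp.single δ' (m δ') + t
              = (t + Finsupp.single δ' (m δ')) + Finsupp.single δ (m δ) := by abel
            _ = Finsupp.erase δ m + Finsupp.single δ (m δ) := by rw [e2]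
            _ = m := e3
        have hval1 : m δ = d - e := by omega
        have hval2 : m δ' = e - u := by omega
        rw [← hval1, ← hval2]
        exact hrec
    · rintro ⟨t, ⟨hsum, hsupp⟩, rfl⟩
      have htj : ∀ j : Fin n, (j : ℕ) < c → t j = 0 := by
        intro j hj
        by_contra h
        have hmem := hsupp (Finsupp.mem_support_iff.2 h)
        rw [hmem_ts] at hmem
        omega
      have htδ : t δ = 0 := htj δ (by omega)
      have htδ' : t δ' = 0 := htj δ' (by rw [hδ'val]; omega)
      set M : Fin n →₀ ℕ := Finsupp.single δ (d - e) + Finsupp.single δ' (e - u) + t with hMdef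
      have hMδ : M δ = d - e := by
        rw [hMdef]
        simp [Finsupp.add_apply, Finsupp.single_apply, htδ, Ne.symm hne]
      have hMδ' : M δ' = e - u := by
        rw [hMdef]
        simp [Finsupp.add_apply, Finsupp.single_apply, htδ', hne]
      have hmdt : mdeg t = u := by
        have h := Finset.sum_subset (Finset.subset_univ ts) (fun x _ hx =>
          Finsupp.notMem_support_iff.1 (fun hxs : x ∈ t.support => hx (hsupp hxs)))
        rw [hsum] at h
        exact h.symm
      have hMdeg : mdeg M = d := by
        rw [hMdef, mdeg_add', mdeg_add', mdeg_single', mdeg_single', hmdt]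
        omega
      have hMmon : IsDeltaMon δ M := by
        intro k hk
        rw [Fin.lt_def] at hk
        have hk1 : k ≠ δ := by
          intro h; rw [h] at hk; omega
        have hk2 : k ≠ δ' := by
          intro h
          have h2 := congrArg Fin.val h
          rw [hδ'val] at h2
          omega
        rw [hMdef]
        simp [Finsupp.add_apply, Finsupp.single_apply, Ne.symm hk1, Ne.symm hk2, htj k (by omega)]
      refine ⟨⟨⟨(hmemF M).2 ⟨hMmon, by omega, by omega, by omega, by omega⟩, ?_⟩, ?_⟩, ?_⟩
      · omega
      · omega
      · omega
  rw [himg, Finset.card_image_of_injective _ (add_right_injective _),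
    card_finsuppAntidiag_eq', hts_card]
  congr 1
  rw [Finset.mem_Icc] at hu
  omega
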